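/- Let t ≥ 3 and let F_{P,t} be the 3-graph on vertex set A ∪ [t] with A = {a₁,…,a_{t−1}}, whose edges are all triples {aᵢ, i, j} with 1 ≤ i < j ≤ t. Then every strong red-blue coloring of F_{P,t} uses exactly t−1 red vertices; in particular q(F_{P,t}) = t−1. -/
import Mathlib


open Finset

/-- Degree of a vertex in a 3-graph. -/
def degH {n : ℕ} (H : Finset (Finset (Fin n))) (v : Fin n) : ℕ :=
  (H.filter (fun e => v ∈ e)).card

/-- `H` is a 3-uniform hypergraph. -/
def Uniform3 {n : ℕ} (H : Finset (Finset (Fin n))) : Prop :=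
  ∀ e ∈ H, e.card = 3

/-- The matching number of `H` is at most `s`. -/
def MatchingAtMost {n : ℕ} (H : Finset (Finset (Fin n))) (s : ℕ) : Prop :=
  ∀ M ⊆ H, (M : Set (Finset (Fin n))).Pairwise (fun e f => Disjoint e f) → M.card ≤ s

/-- `H` contains a copy of the hypergraph with edge set `F`. -/
def HasCopy {α : Type*} [DecidableEq α] {n : ℕ}
    (F : Set (Finset α)) (H : Finset (Finset (Fin n))) : Prop :=
  ∃ f : α → Fin n, Function.Injective f ∧ ∀ e ∈ F, e.image f ∈ H

/-- Number of edges of the Turán graph `T(n, r)`. -/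
def turanEdges (n r : ℕ) : ℕ := (SimpleGraph.turanGraph n r).edgeFinset.card

/-- Edge set of the 3-graph `F_{P,t}` on `A ∪ [t]`, `A = Fin (t-1)`:
edges are `{aᵢ, i, j}` for `1 ≤ i < j ≤ t`. -/
def FPtEdges (t : ℕ) : Set (Finset (Fin (t - 1) ⊕ Fin t)) :=
  { e | ∃ (i : Fin (t - 1)) (j : Fin t), (i : ℕ) < (j : ℕ) ∧
      e = {Sum.inl i, Sum.inr (Fin.castLE (Nat.sub_le t 1) i), Sum.inr j} }

/-- Auxiliary: `aᵢ` is red. -/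
def redA (m : ℕ) (R : Finset (Fin (m + 3 - 1) ⊕ Fin (m + 3))) (a : ℕ) : Prop :=
  ∃ h : a < m + 3 - 1, Sum.inl (⟨a, h⟩ : Fin (m + 3 - 1)) ∈ R

/-- Auxiliary: vertex `b` of `[t]` is red. -/
def redB (m : ℕ) (R : Finset (Fin (m + 3 - 1) ⊕ Fin (m + 3))) (b : ℕ) : Prop :=
  ∃ h : b < m + 3, Sum.inr (⟨b, h⟩ : Fin (m + 3)) ∈ R

theorem stmt_5 (t : ℕ) (ht : 3 ≤ t) :
    (∃ R : Finset (Fin (t - 1) ⊕ Fin t),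
      ∀ e ∈ FPtEdges t, (e.filter (fun v => v ∈ R)).card = 1) ∧
    (∀ R : Finset (Fin (t - 1) ⊕ Fin t),
      (∀ e ∈ FPtEdges t, (e.filter (fun v => v ∈ R)).card = 1) → R.card = t - 1) := by
  obtain ⟨m, rfl⟩ : ∃ m, t = m + 3 := ⟨t - 3, by omega⟩
  constructor
  · refine ⟨(univ : Finset (Fin (m + 3 - 1))).image Sum.inl, ?_⟩
    rintro e ⟨i, j, hij, rfl⟩
    rw [Finset.filter_insert, if_pos (by simp), Finset.filter_insert, if_neg (by simp),
      Finset.filter_singleton, if_neg (by simp)]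
    simp
  · intro R hR
    have key : ∀ a b : ℕ, a < m + 2 → b < m + 3 → a < b →
        ((redA m R) a ∧ ¬ (redB m R) a ∧ ¬ (redB m R) b) ∨ (¬ (redA m R) a ∧ (redB m R) a ∧ ¬ (redB m R) b) ∨ (¬ (redA m R) a ∧ ¬ (redB m R) a ∧ (redB m R) b) := by
      intro a b ha hb hab
      have ha' : a < m + 3 - 1 := by omega
      have ha'' : a < m + 3 := by omega
      have he : ({Sum.inl ⟨a, ha'⟩, Sum.inr ⟨a, ha''⟩, Sum.inr ⟨b, hb⟩} :
          Finset (Fin (m + 3 - 1) ⊕ Fin (m + 3))) ∈ FPtEdges (m + 3) :=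
        ⟨⟨a, ha'⟩, ⟨b, hb⟩, hab, rfl⟩
      have h1 := hR _ he
      rw [Finset.card_filter, Finset.sum_insert (by simp),
        Finset.sum_insert (by simp [Fin.ext_iff]; omega), Finset.sum_singleton] at h1
      have eA : redA m R a ↔ Sum.inl (⟨a, ha'⟩ : Fin (m + 3 - 1)) ∈ R :=
        ⟨fun ⟨h, hm⟩ => hm, fun hm => ⟨ha', hm⟩⟩
      have eB : redB m R a ↔ Sum.inr (⟨a, ha''⟩ : Fin (m + 3)) ∈ R :=
        ⟨fun ⟨h, hm⟩ => hm, fun hm => ⟨ha'', hm⟩⟩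
      have eC : redB m R b ↔ Sum.inr (⟨b, hb⟩ : Fin (m + 3)) ∈ R :=
        ⟨fun ⟨h, hm⟩ => hm, fun hm => ⟨hb, hm⟩⟩
      rw [eA, eB, eC]
      by_cases hA : Sum.inl (⟨a, ha'⟩ : Fin (m + 3 - 1)) ∈ R <;>
        by_cases hB : Sum.inr (⟨a, ha''⟩ : Fin (m + 3)) ∈ R <;>
        by_cases hC : Sum.inr (⟨b, hb⟩ : Fin (m + 3)) ∈ R <;>
        simp [hA, hB, hC] at h1 ⊢
    have hBf : ∀ b, 1 ≤ b → b < m + 3 → ¬ (redB m R) b := by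
      intro b hb1 hb hsb
      have h01 := key 0 1 (by omega) (by omega) (by omega)
      have h02 := key 0 2 (by omega) (by omega) (by omega)
      have h12 := key 1 2 (by omega) (by omega) (by omega)
      have h0b := key 0 b (by omega) hb (by omega)
      obtain ⟨hnA0, hnB0, -⟩ : ¬ redA m R 0 ∧ ¬ redB m R 0 ∧ redB m R b := by
        rcases h0b with ⟨-, -, hc⟩ | ⟨-, -, hc⟩ | hc
        · exact absurd hsb hc
        · exact absurd hsb hc
        · exact hc
      have hb1' : redB m R 1 := by
        rcases h01 with ⟨hA, -, -⟩ | ⟨-, hB, -⟩ | ⟨-, -, hc⟩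
        · exact absurd hA hnA0
        · exact absurd hB hnB0
        · exact hc
      have hb2' : redB m R 2 := by
        rcases h02 with ⟨hA, -, -⟩ | ⟨-, hB, -⟩ | ⟨-, -, hc⟩
        · exact absurd hA hnA0
        · exact absurd hB hnB0
        · exact hc
      rcases h12 with ⟨-, h, -⟩ | ⟨-, -, h⟩ | ⟨-, h, -⟩
      · exact h hb1'
      · exact h hb2'
      · exact h hb1'
    have hAt : ∀ a, 1 ≤ a → a < m + 2 → (redA m R) a := by
      intro a ha1 ha
      have h := key a (a + 1) ha (by omega) (by omega)
      have hBa := hBf a ha1 (by omega)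
      have hBa1 := hBf (a + 1) (by omega) (by omega)
      rcases h with ⟨h, -, -⟩ | ⟨-, h, -⟩ | ⟨-, -, h⟩
      · exact h
      · exact absurd h hBa
      · exact absurd h hBa1
    have h01 := key 0 1 (by omega) (by omega) (by omega)
    have hB1 := hBf 1 (by omega) (by omega)
    by_cases hs0 : (redB m R) 0
    · have hA0 : ¬ (redA m R) 0 := by
        rcases h01 with ⟨-, h, -⟩ | ⟨h, -, -⟩ | ⟨h, -, -⟩
        · exact absurd hs0 h
        · exact h
        · exact h
      have hEq : R = insert (Sum.inr (⟨0, by omega⟩ : Fin (m + 3)))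
          (((univ : Finset (Fin (m + 3 - 1))).filter (fun i => 1 ≤ i.val)).image Sum.inl) := by
        ext v
        rcases v with i | j
        · simp only [Finset.mem_insert, Finset.mem_image, Finset.mem_filter, Finset.mem_univ,
            true_and]
          constructor
          · intro hv
            rcases Nat.eq_zero_or_pos (i : ℕ) with h0 | h0
            · exact absurd ⟨by omega, by rwa [show (⟨0, by omega⟩ : Fin (m + 3 - 1)) = i from Fin.ext h0.symm]⟩ hA0
            · exact Or.inr ⟨i, h0, rfl⟩
          · rintro (h | ⟨x, hx, hxe⟩)
            · exact absurd h (by simp)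
            · obtain ⟨h, hm⟩ := hAt (x : ℕ) hx x.isLt
              rw [← hxe]
              rwa [show (⟨(x : ℕ), h⟩ : Fin (m + 3 - 1)) = x from Fin.ext rfl] at hm
        · simp only [Finset.mem_insert, Finset.mem_image, Finset.mem_filter, Finset.mem_univ,
            true_and]
          constructor
          · intro hv
            rcases Nat.eq_zero_or_pos (j : ℕ) with h0 | h0
            · exact Or.inl (by rw [show j = (⟨0, by omega⟩ : Fin (m + 3)) from Fin.ext h0])
            · exact absurd ⟨j.isLt, by rwa [show (⟨(j : ℕ), j.isLt⟩ : Fin (m + 3)) = j from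
                Fin.ext rfl]⟩ (hBf (j : ℕ) h0 j.isLt)
          · rintro (h | ⟨x, hx, hxe⟩)
            · obtain ⟨h', hm⟩ := hs0
              rw [h]
              rwa [show (⟨0, h'⟩ : Fin (m + 3)) = (⟨0, by omega⟩ : Fin (m + 3)) from rfl] at hm
            · exact absurd hxe (by simp)
      have hfe : ((univ : Finset (Fin (m + 3 - 1))).filter (fun i => 1 ≤ i.val))
          = univ.erase ⟨0, by omega⟩ := by
        ext i
        simp only [Finset.mem_filter, Finset.mem_univ, true_and, Finset.mem_erase, ne_eq,
          Fin.ext_iff, and_true]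
        show 1 ≤ i.val ↔ ¬ i.val = 0
        omega
      rw [hEq, Finset.card_insert_of_notMem (by simp),
        Finset.card_image_of_injective _ Sum.inl_injective, hfe,
        Finset.card_erase_of_mem (Finset.mem_univ _), Finset.card_univ, Fintype.card_fin]
      omega
    · have hA0 : (redA m R) 0 := by
        rcases h01 with ⟨h, -, -⟩ | ⟨-, h, -⟩ | ⟨-, -, h⟩
        · exact h
        · exact absurd h hs0
        · exact absurd h hB1
      have hEq : R = (univ : Finset (Fin (m + 3 - 1))).image Sum.inl := by
        ext v
        rcases v with i | j
        · simp only [Finset.mem_image, Finset.mem_univ, true_and]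
          constructor
          · intro _; exact ⟨i, rfl⟩
          · rintro ⟨x, hxe⟩
            rw [← hxe]
            rcases Nat.eq_zero_or_pos (x : ℕ) with h0 | h0
            · obtain ⟨h, hm⟩ := hA0
              rwa [show (⟨0, h⟩ : Fin (m + 3 - 1)) = x from Fin.ext h0.symm] at hm
            · obtain ⟨h, hm⟩ := hAt (x : ℕ) h0 x.isLt
              rwa [show (⟨(x : ℕ), h⟩ : Fin (m + 3 - 1)) = x from Fin.ext rfl] at hm
        · simp only [Finset.mem_image, Finset.mem_univ, true_and]
          constructor
          · intro hv
            rcases Nat.eq_zero_or_pos (j : ℕ) with h0 | h0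
            · exact absurd (⟨by omega, by
                rwa [show (⟨0, by omega⟩ : Fin (m + 3)) = j from Fin.ext h0.symm]⟩ :
                redB m R 0) hs0
            · exact absurd (⟨j.isLt, by rwa [show (⟨(j : ℕ), j.isLt⟩ : Fin (m + 3)) = j from
                Fin.ext rfl]⟩ : redB m R (j : ℕ)) (hBf (j : ℕ) h0 j.isLt)
          · rintro ⟨x, hxe⟩
            exact absurd hxe (by simp)
      rw [hEq, Finset.card_image_of_injective _ Sum.inl_injective, Finset.card_univ,
        Fintype.card_fin]
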